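/- Let κ be an infinite cardinal, X a set of cardinality κ⁺, and ⟨·⟩ a hull operator on X with finite supports and the MacLane–Steinitz exchange property. If |⟨F⟩ \ ⟨∅⟩| ≤ κ for each finite F ⊆ X, then X \ ⟨∅⟩ can be covered by κ many independent subsets. -/

import Mathlib

namespace Stmt3Aux

open Cardinal

variable {X : Type u} (h : Set X → Set X)

/-- Iterated relative closure. -/
def clIter (A : Set X) : ℕ → Set X
  | 0 => A
  | n + 1 => clIter A n ∪ (h (clIter A n) \ h ∅)

/-- ω-iterated relative closure. -/
def clStar (A : Set X) : Set X := ⋃ n : ℕ, clIter h A n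

theorem subset_clStar (A : Set X) : A ⊆ clStar h A :=
  Set.subset_iUnion (clIter h A) 0

theorem clIter_mono_nat (A : Set X) {m n : ℕ} (hmn : m ≤ n) :
    clIter h A m ⊆ clIter h A n := by
  induction n with
  | zero => simp_all
  | succ n ih =>
    rcases Nat.lt_or_ge m (n + 1) with hm | hm
    · exact (ih (Nat.lt_succ_iff.mp hm)).trans Set.subset_union_left
    · have : m = n + 1 := le_antisymm hmn hm
      subst this; rfl

theorem clIter_mono (hmono : ∀ A B : Set X, A ⊆ B → h A ⊆ h B)
    {A B : Set X} (hAB : A ⊆ B) (n : ℕ) : clIter h A n ⊆ clIter h B n := by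
  induction n with
  | zero => exact hAB
  | succ n ih =>
    exact Set.union_subset_union ih (Set.diff_subset_diff_left (hmono _ _ ih))

theorem clStar_mono (hmono : ∀ A B : Set X, A ⊆ B → h A ⊆ h B)
    {A B : Set X} (hAB : A ⊆ B) : clStar h A ⊆ clStar h B :=
  Set.iUnion_mono fun n => clIter_mono h hmono hAB n

theorem clStar_closed
    (hfin : ∀ (A : Set X) (a : X), a ∈ h A → ∃ F : Finset X, ↑F ⊆ A ∧ a ∈ h ↑F)
    (hmono : ∀ A B : Set X, A ⊆ B → h A ⊆ h B)
    (A : Set X) {x : X} (hx : x ∈ h (clStar h A)) (hx0 : x ∉ h ∅) :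
    x ∈ clStar h A := by
  classical
  obtain ⟨F, hFsub, hxF⟩ := hfin _ x hx
  have hex : ∃ n : ℕ, ↑F ⊆ clIter h A n := by
    clear hxF
    induction F using Finset.induction with
    | empty => exact ⟨0, by simp⟩
    | @insert b G hbG ih =>
      have hG : (↑G : Set X) ⊆ clStar h A := by
        refine Set.Subset.trans ?_ hFsub; simp [Set.subset_insert]
      obtain ⟨n, hn⟩ := ih hG
      have hb : b ∈ clStar h A := hFsub (by simp)
      obtain ⟨m, hm⟩ := Set.mem_iUnion.mp hb
      refine ⟨max n m, ?_⟩
      rw [Finset.coe_insert, Set.insert_subset_iff]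
      exact ⟨clIter_mono_nat h A (le_max_right n m) hm,
        hn.trans (clIter_mono_nat h A (le_max_left n m))⟩
  obtain ⟨n, hn⟩ := hex
  have : x ∈ clIter h A (n + 1) := Or.inr ⟨hmono _ _ hn hxF, hx0⟩
  exact Set.mem_iUnion.mpr ⟨n + 1, this⟩

theorem card_hull_diff {κ : Cardinal.{u}} (hκ : ℵ₀ ≤ κ)
    (hfin : ∀ (A : Set X) (a : X), a ∈ h A → ∃ F : Finset X, ↑F ⊆ A ∧ a ∈ h ↑F)
    (hsmall : ∀ F : Finset X, #(h ↑F \ h ∅ : Set X) ≤ κ)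
    {A : Set X} (hA : #A ≤ κ) : #(h A \ h ∅ : Set X) ≤ κ := by
  classical
  have hsub : (h A \ h ∅ : Set X) ⊆
      ⋃ F : {F : Finset X // ↑F ⊆ A}, (h ↑F.1 \ h ∅ : Set X) := by
    rintro x ⟨hx1, hx2⟩
    obtain ⟨F, hFA, hxF⟩ := hfin A x hx1
    exact Set.mem_iUnion.mpr ⟨⟨F, hFA⟩, hxF, hx2⟩
  have hι : #{F : Finset X // ↑F ⊆ A} ≤ κ := by
    have hemb : Function.Injective
        (fun F : {F : Finset X // ↑F ⊆ A} => F.1.subtype (· ∈ A)) := by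
      intro F G hFG
      have h1 := congrArg (Finset.map (Function.Embedding.subtype (· ∈ A))) hFG
      simp only [Finset.subtype_map] at h1
      rw [Finset.filter_true_of_mem (fun x hx => F.2 hx),
        Finset.filter_true_of_mem (fun x hx => G.2 hx)] at h1
      exact Subtype.ext h1
    have h1 : #{F : Finset X // ↑F ⊆ A} ≤ #(Finset ↥A) := mk_le_of_injective hemb
    rcases finite_or_infinite ↥A with hfA | hfA
    · haveI := hfA
      haveI : Finite (Finset ↥A) := by
        haveI := Fintype.ofFinite ↥A
        infer_instance
      exact h1.trans ((lt_aleph0_of_finite _).le.trans hκ)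
    · haveI := hfA
      rw [mk_finset_of_infinite] at h1
      exact h1.trans hA
  calc #(h A \ h ∅ : Set X)
      ≤ #(⋃ F : {F : Finset X // ↑F ⊆ A}, (h ↑F.1 \ h ∅ : Set X)) :=
        mk_le_mk_of_subset hsub
    _ ≤ #{F : Finset X // ↑F ⊆ A} * ⨆ F : {F : Finset X // ↑F ⊆ A},
          #(h ↑F.1 \ h ∅ : Set X) := mk_iUnion_le _
    _ ≤ κ * κ := by
        have : Nonempty {F : Finset X // ↑F ⊆ A} := ⟨⟨∅, by simp⟩⟩
        exact mul_le_mul' hι (ciSup_le' fun F => hsmall F.1)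
    _ = κ := mul_eq_self hκ

theorem clStar_card {κ : Cardinal.{u}} (hκ : ℵ₀ ≤ κ)
    (hfin : ∀ (A : Set X) (a : X), a ∈ h A → ∃ F : Finset X, ↑F ⊆ A ∧ a ∈ h ↑F)
    (hsmall : ∀ F : Finset X, #(h ↑F \ h ∅ : Set X) ≤ κ)
    {A : Set X} (hA : #A ≤ κ) : #(clStar h A) ≤ κ := by
  have hiter : ∀ n : ℕ, #(clIter h A n) ≤ κ := by
    intro n
    induction n with
    | zero => exact hA
    | succ n ih =>
      calc #(clIter h A (n + 1)) ≤ #(clIter h A n) + #(h (clIter h A n) \ h ∅ : Set X) :=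
            mk_union_le _ _
        _ ≤ κ + κ := add_le_add ih (card_hull_diff h hκ hfin hsmall ih)
        _ = κ := add_eq_self hκ
  have hsub : clStar h A ⊆ ⋃ n : ULift.{u} ℕ, clIter h A n.down := by
    intro x hx
    obtain ⟨n, hn⟩ := Set.mem_iUnion.mp hx
    exact Set.mem_iUnion.mpr ⟨⟨n⟩, hn⟩
  calc #(clStar h A) ≤ #(⋃ n : ULift.{u} ℕ, clIter h A n.down) :=
        mk_le_mk_of_subset hsub
    _ ≤ #(ULift.{u} ℕ) * ⨆ n : ULift.{u} ℕ, #(clIter h A n.down) := mk_iUnion_le _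
    _ ≤ ℵ₀ * κ := mul_le_mul' (le_of_eq (by simp)) (ciSup_le' fun n => hiter n.down)
    _ ≤ κ * κ := mul_le_mul' hκ le_rfl
    _ = κ := mul_eq_self hκ

end Stmt3Aux

open Cardinal in
theorem stmt3 {X : Type u} (h : Set X → Set X) (κ : Cardinal.{u})
    (hκ : ℵ₀ ≤ κ) (hX : #X = Order.succ κ)
    (hext : ∀ A : Set X, A ⊆ h A)
    (hmono : ∀ A B : Set X, A ⊆ B → h A ⊆ h B)
    (hfin : ∀ (A : Set X) (a : X), a ∈ h A → ∃ F : Finset X, ↑F ⊆ A ∧ a ∈ h ↑F)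
    (hexch : ∀ (A : Set X) (x y : X), x ∉ h A → y ∉ h A →
      (x ∈ h (A ∪ {y}) ↔ y ∈ h (A ∪ {x})))
    (hsmall : ∀ F : Finset X, #(h ↑F \ h ∅ : Set X) ≤ κ) :
    ∃ c : κ.out → Set X, (∀ i, ∀ a ∈ c i, a ∉ h (c i \ {a})) ∧
      Set.univ \ h ∅ ⊆ ⋃ i, c i := by
  classical
  haveI hNEκ : Nonempty κ.out := by
    rw [← Cardinal.mk_ne_zero_iff, Cardinal.mk_out]
    exact (aleph0_pos.trans_le hκ).ne'
  obtain ⟨e⟩ : Nonempty (X ≃ (Order.succ κ).ord.ToType) :=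
    Cardinal.eq.mp (hX.trans (Cardinal.mk_ord_toType (Order.succ κ)).symm)
  set T := (Order.succ κ).ord.ToType with hT
  -- initial segments are small
  have hseg : ∀ t : T, #({y : X | e y ≤ t} : Set X) ≤ κ := by
    intro t
    have h1 : #(Set.Iic t) ≤ κ := by
      rw [← Set.Iio_insert]
      refine (Cardinal.mk_insert_le).trans ?_
      have h2 : #(Set.Iio t) ≤ κ :=
        Order.lt_succ_iff.mp (Cardinal.mk_Iio_ord_toType t)
      calc #(Set.Iio t) + 1 ≤ κ + κ :=
            add_le_add h2 (one_le_aleph0.trans hκ)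
        _ = κ := add_eq_self hκ
    have h3 : ({y : X | e y ≤ t} : Set X) = e ⁻¹' (Set.Iic t) := rfl
    rw [h3]
    exact (Cardinal.mk_preimage_of_injective e (Set.Iic t) e.injective).trans h1
  -- the closed sets W t
  set W : T → Set X := fun t => Stmt3Aux.clStar h {y : X | e y ≤ t} with hW
  have hWmono : ∀ {s t : T}, s ≤ t → W s ⊆ W t := fun {s t} hst =>
    Stmt3Aux.clStar_mono h hmono (fun y hy => le_trans hy hst)
  have hWcard : ∀ t, #(W t) ≤ κ := fun t =>
    Stmt3Aux.clStar_card h hκ hfin hsmall (hseg t)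
  have hWclosed : ∀ (t : T) {x : X}, x ∈ h (W t) → x ∉ h ∅ → x ∈ W t := by
    intro t x hx hx0
    exact Stmt3Aux.clStar_closed h hfin hmono _ hx hx0
  have hmemW : ∀ x : X, x ∈ W (e x) := fun x =>
    Stmt3Aux.subset_clStar h _ (le_refl (e x))
  -- the rank function σ
  have wf : WellFounded (fun a b : T => a < b) := wellFounded_lt
  set σ : X → T := fun x => wf.min {t : T | x ∈ W t} ⟨e x, hmemW x⟩ with hσ
  have hσmem : ∀ x, x ∈ W (σ x) := fun x => wf.min_mem {t : T | x ∈ W t} _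
  have hσmin : ∀ (x) (t : T), t < σ x → x ∉ W t := fun x t ht hx =>
    wf.not_lt_min {t : T | x ∈ W t} hx ht
  -- layers and colorings
  set D : T → Set X := fun t => {x : X | x ∉ h ∅ ∧ σ x = t} with hD
  have hDW : ∀ t, D t ⊆ W t := by
    rintro t x ⟨hx0, hxt⟩
    rw [← hxt]; exact hσmem x
  have hembD : ∀ t, Nonempty ((D t : Set X) ↪ κ.out) := by
    intro t
    have : #(D t) ≤ #(κ.out) := by
      rw [Cardinal.mk_out]
      exact (mk_le_mk_of_subset (hDW t)).trans (hWcard t)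
    exact (Cardinal.le_def _ _).mp this
  set emb : ∀ t, (D t : Set X) ↪ κ.out := fun t => (hembD t).some with hembdef
  have hxD : ∀ {x : X}, x ∉ h ∅ → x ∈ D (σ x) := fun {x} hx => ⟨hx, rfl⟩
  set color : X → κ.out := fun x =>
    if hx : x ∉ h ∅ then emb (σ x) ⟨x, hxD hx⟩ else Classical.arbitrary _
    with hcolor
  -- injectivity of color on each layer
  have hinj : ∀ x y : X, x ∉ h ∅ → y ∉ h ∅ → σ x = σ y → color x = color y → x = y := by
    intro x y hx hy hst hc
    rw [hcolor] at hc
    simp only [dif_pos hx, dif_pos hy] at hc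
    have hyD : y ∈ D (σ x) := ⟨hy, hst.symm⟩
    have hgen : ∀ (t : T) (h1 : y ∈ D t) (h2 : y ∈ D (σ x)) (_ : t = σ x),
        emb t ⟨y, h1⟩ = emb (σ x) ⟨y, h2⟩ := by
      rintro t h1 h2 rfl; rfl
    rw [hgen (σ y) (hxD hy) hyD hst.symm] at hc
    exact congrArg Subtype.val ((emb (σ x)).injective hc)
  refine ⟨fun i => {x : X | x ∉ h ∅ ∧ color x = i}, ?_, ?_⟩
  · -- independence
    intro i a ha hcon
    set C : Set X := {x : X | x ∉ h ∅ ∧ color x = i} with hC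
    obtain ⟨ha0, hacol⟩ := ha
    obtain ⟨F0, hF0sub, hF0mem⟩ := hfin _ a hcon
    have hPex : ∃ n : ℕ, ∃ F : Finset X, F.card = n ∧ ↑F ⊆ C \ {a} ∧ a ∈ h ↑F :=
      ⟨F0.card, F0, rfl, hF0sub, hF0mem⟩
    obtain ⟨F, hFcard, hFsub, hFmem⟩ := Nat.find_spec hPex
    have hmin : ∀ G : Finset X, ↑G ⊆ C \ {a} → G.card < F.card → a ∉ h ↑G := by
      intro G hG hGc hGa
      exact Nat.find_min hPex (hFcard ▸ hGc) ⟨G, rfl, hG, hGa⟩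
    have hmemF : ∀ f ∈ F, f ∈ C ∧ f ≠ a := by
      intro f hf
      have := hFsub hf
      exact ⟨this.1, by simpa using this.2⟩
    rcases F.eq_empty_or_nonempty with hFe | hFne
    · subst hFe
      simp only [Finset.coe_empty] at hFmem
      exact ha0 hFmem
    obtain ⟨b, hbF, hbmax⟩ := F.exists_max_image σ hFne
    obtain ⟨⟨hb0, hbcol⟩, hbne⟩ := hmemF b hbF
    have hσba : σ b ≠ σ a := by
      intro hh
      exact hbne (hinj b a hb0 ha0 hh (hbcol.trans hacol.symm))
    rcases lt_or_gt_of_ne hσba with hlt | hgt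
    · -- all of F below σ a : contradiction with minimality of σ a
      have hFW : (↑F : Set X) ⊆ W (σ b) := by
        intro f hf
        exact hWmono (hbmax f hf) (hσmem f)
      have : a ∈ W (σ b) := hWclosed (σ b) (hmono _ _ hFW hFmem) ha0
      exact hσmin a (σ b) hlt this
    · -- exchange argument
      set A : Finset X := F.erase b with hA
      -- the finite set A ∪ {a} lies in some W t0 with t0 < σ b
      have hGne : (insert a A).Nonempty := ⟨a, Finset.mem_insert_self a A⟩
      obtain ⟨g0, hg0mem, hg0max⟩ := (insert a A).exists_max_image σ hGne
      set t0 : T := σ g0 with ht0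
      have hσlt : ∀ g ∈ insert a A, σ g < σ b := by
        intro g hg
        rcases Finset.mem_insert.mp hg with rfl | hgA
        · exact hgt
        · have hgF := Finset.mem_of_mem_erase hgA
          have hgneb := Finset.ne_of_mem_erase hgA
          obtain ⟨⟨hg0', hgcol⟩, _⟩ := hmemF g hgF
          rcases lt_or_eq_of_le (hbmax g hgF) with hlt | heq
          · exact hlt
          · exact absurd (hinj g b hg0' hb0 heq (hgcol.trans hbcol.symm)) hgneb
      have ht0lt : t0 < σ b := hσlt g0 hg0mem
      have hGW : (↑(insert a A) : Set X) ⊆ W t0 := by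
        intro g hg
        exact hWmono (hg0max g hg) (hσmem g)
      have hbW : b ∉ W t0 := hσmin b t0 ht0lt
      have haW : (↑A : Set X) ∪ {a} ⊆ W t0 := by
        rw [Set.union_singleton, ← Finset.coe_insert]
        exact hGW
      have hAW : (↑A : Set X) ⊆ W t0 := Set.union_subset_iff.mp haW |>.1
      have hbA : b ∉ h ↑A := by
        intro hb
        exact hbW (hWclosed t0 (hmono _ _ hAW hb) hb0)
      have haA : a ∉ h ↑A := by
        refine hmin A ?_ (Finset.card_erase_lt_of_mem hbF)
        exact Set.Subset.trans (by exact_mod_cast Finset.coe_subset.mpr (Finset.erase_subset b F)) hFsub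
      have hunion : (↑A : Set X) ∪ {b} = ↑F := by
        rw [Set.union_singleton, hA, Finset.coe_erase, Set.insert_diff_singleton,
          Set.insert_eq_self.mpr (by exact_mod_cast hbF)]
      have hab : a ∈ h ((↑A : Set X) ∪ {b}) := by rw [hunion]; exact hFmem
      have hba : b ∈ h ((↑A : Set X) ∪ {a}) := (hexch ↑A a b haA hbA).mp hab
      exact hbW (hWclosed t0 (hmono _ _ haW hba) hb0)
  · -- coverage
    rintro x ⟨-, hx0⟩
    exact Set.mem_iUnion.mpr ⟨color x, hx0, rfl⟩
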